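/- Fix integers ℓ ≥ 2 and m with 1 ≤ m < ℓ, and define w : ℤ → ℂ by w(n) = e(nm/ℓ) for n ≥ 1 and w(n) = 0 otherwise, where e(t) = e^{2πit}. Then |w(n)| ≤ 1 for all n, and for every positive integer H: (i) 𝒞_{w_H}(a) = e(am/ℓ)·max(H − |a|, 0) for every integer a; (ii) Σ_{a≡0 (mod ℓ)} 𝒞_{w_H}(a) = H²/ℓ + O(H) with an absolute implied constant; (iii) Σ_{a∈ℤ} 𝒞_{w_H}(a) = |Σ_{h≤ℓ·{H/ℓ}} e(hm/ℓ)|² ≪ ℓ², where {·} denotes the fractional part. Consequently w is absolutely bounded but not an arithmetic weight: there is no constant C such that |Σ_{a≡0 (mod ℓ)} 𝒞_{w_H}(a) − (1/ℓ)·Σ_{a∈ℤ} 𝒞_{w_H}(a)| ≤ C·H holds for all H. -/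

import Mathlib

/-- `e(t) = e^{2πit}`. -/
noncomputable def eC (t : ℝ) : ℂ := Complex.exp (2 * Real.pi * Complex.I * t)

/-- The restriction `w_H` of a weight `w` to `[-H,H]`. -/
noncomputable def wres (w : ℤ → ℂ) (H : ℕ) (a : ℤ) : ℂ := if |a| ≤ (H : ℤ) then w a else 0

/-- The correlation `𝒞_{w_H}(a) = Σ_m w_H(m)·conj(w_H(m-a))`. -/
noncomputable def corrW (w : ℤ → ℂ) (H : ℕ) (a : ℤ) : ℂ :=
  ∑ m ∈ Finset.Icc (-(H : ℤ)) (H : ℤ), wres w H m * (starRingEnd ℂ) (wres w H (m - a))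

lemma eC_add (s t : ℝ) : eC (s + t) = eC s * eC t := by
  simp [eC, ← Complex.exp_add]; ring_nf

lemma eC_abs (t : ℝ) : ‖eC t‖ = 1 := by
  simp [eC, Complex.norm_exp]

lemma eC_conj (t : ℝ) : (starRingEnd ℂ) (eC t) = eC (-t) := by
  simp [eC, ← Complex.exp_conj, Complex.conj_ofNat]

lemma eC_int (k : ℤ) : eC k = 1 := by
  have := Complex.exp_int_mul_two_pi_mul_I k
  rw [eC, ← this]; push_cast; ring_nf

lemma eC_pow (t : ℝ) (n : ℕ) : eC t ^ n = eC (n * t) := by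
  rw [eC, eC, ← Complex.exp_nat_mul]; push_cast; ring_nf

lemma sumabs (q : ℕ) : ∑ k ∈ Finset.Icc (-(q:ℤ)) (q:ℤ), |k| = q * (q+1) := by
  induction q with
  | zero => simp
  | succ n ih =>
    have hs : Finset.Icc (-(n+1:ℤ)) ((n:ℤ)+1) =
        insert (-(n+1:ℤ)) (insert ((n:ℤ)+1) (Finset.Icc (-(n:ℤ)) (n:ℤ))) := by
      ext x; simp only [Finset.mem_Icc, Finset.mem_insert]; omega
    push_cast
    rw [hs, Finset.sum_insert (by simp only [Finset.mem_insert, Finset.mem_Icc]; omega),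
      Finset.sum_insert (by simp only [Finset.mem_Icc]; omega), ih]
    rw [abs_of_nonpos (by omega), abs_of_nonneg (by omega)]
    push_cast
    ring

lemma sum_linear (q : ℕ) (H L : ℤ) :
    ∑ k ∈ Finset.Icc (-(q:ℤ)) (q:ℤ), (H - L * |k|) = (2*q+1) * H - L * (q * (q+1)) := by
  rw [Finset.sum_sub_distrib, Finset.sum_const, ← Finset.mul_sum, sumabs, Int.card_Icc]
  have h : ((q:ℤ) + 1 - -(q:ℤ)).toNat = 2*q+1 := by omega
  rw [h]
  push_cast
  ring

lemma filter_eq_image (ℓ : ℕ) (hℓ : 0 < ℓ) (N : ℕ) :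
    (Finset.Icc (-(N:ℤ)) (N:ℤ)).filter (fun a => (ℓ:ℤ) ∣ a) =
      (Finset.Icc (-((N/ℓ : ℕ):ℤ)) ((N/ℓ : ℕ):ℤ)).image (fun k => (ℓ:ℤ) * k) := by
  have hℓz : (0:ℤ) < (ℓ:ℤ) := by exact_mod_cast hℓ
  have hK : ((N/ℓ : ℕ):ℤ) = (N:ℤ) / (ℓ:ℤ) := Int.natCast_div N ℓ
  ext x
  simp only [Finset.mem_filter, Finset.mem_image, Finset.mem_Icc]
  constructor
  · rintro ⟨⟨h1, h2⟩, c, rfl⟩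
    refine ⟨c, ⟨?_, ?_⟩, rfl⟩
    · rw [hK, neg_le, Int.le_ediv_iff_mul_le hℓz]; nlinarith
    · rw [hK, Int.le_ediv_iff_mul_le hℓz]; nlinarith
  · rintro ⟨k, ⟨h1, h2⟩, rfl⟩
    rw [hK] at h1 h2
    refine ⟨⟨?_, ?_⟩, Dvd.intro k rfl⟩
    · have := (Int.le_ediv_iff_mul_le hℓz).mp (neg_le.mp h1)
      nlinarith
    · have := (Int.le_ediv_iff_mul_le hℓz).mp h2
      nlinarith

lemma z_ne_one {ℓ m : ℕ} (hℓ : 2 ≤ ℓ) (hm : 1 ≤ m) (hmℓ : m < ℓ) : eC ((m:ℝ) / ℓ) ≠ 1 := by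
  intro h
  rw [eC, Complex.exp_eq_one_iff] at h
  obtain ⟨n, hn⟩ := h
  have h2 : ((m:ℝ)/ℓ : ℂ) = (n:ℂ) := by
    have hne : (2 * (Real.pi:ℂ) * Complex.I) ≠ 0 := by
      simp [Real.pi_ne_zero, Complex.I_ne_zero]
    apply mul_left_cancel₀ hne
    push_cast at hn ⊢
    rw [hn]; ring
  have h3 : (m:ℝ)/ℓ = (n:ℝ) := by exact_mod_cast h2
  have hℓ0 : (0:ℝ) < ℓ := by positivity
  have hpos : 0 < (m:ℝ)/ℓ := by positivity
  have hlt : (m:ℝ)/ℓ < 1 := by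
    rw [div_lt_one hℓ0]; exact_mod_cast hmℓ
  rw [h3] at hpos hlt
  have h4 : 0 < n := by exact_mod_cast hpos
  have h5 : n < 1 := by exact_mod_cast hlt
  omega

lemma block_zero {ℓ m : ℕ} (hℓ : 2 ≤ ℓ) (hm : 1 ≤ m) (hmℓ : m < ℓ) (K : ℕ) :
    ∑ h ∈ Finset.Ioc K (K + ℓ), eC ((h:ℝ) * m / ℓ) = 0 := by
  have hz : ∀ h : ℕ, eC ((h:ℝ) * m / ℓ) = eC ((m:ℝ)/ℓ) ^ h := by
    intro h; rw [eC_pow]; congr 1; ring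
  have hzl : eC ((m:ℝ)/ℓ) ^ ℓ = 1 := by
    rw [eC_pow]
    have h : (ℓ:ℝ) * ((m:ℝ)/ℓ) = ((m:ℤ):ℝ) := by
      have : (ℓ:ℝ) ≠ 0 := by positivity
      field_simp
      norm_cast
    rw [h, eC_int]
  simp only [hz]
  have hIoc : Finset.Ioc K (K + ℓ) = Finset.Ico (K+1) (K + ℓ + 1) := by
    ext x; simp only [Finset.mem_Ioc, Finset.mem_Ico]; omega
  rw [hIoc, geom_sum_Ico' (z_ne_one hℓ hm hmℓ) (by omega),
    show K + ℓ + 1 = (K + 1) + ℓ from by ring, pow_add _ (K+1) ℓ, hzl, mul_one, sub_self, zero_div]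

lemma S_mod {ℓ m : ℕ} (hℓ : 2 ≤ ℓ) (hm : 1 ≤ m) (hmℓ : m < ℓ) (N : ℕ) :
    ∑ h ∈ Finset.Icc 1 N, eC ((h:ℝ) * m / ℓ) =
      ∑ h ∈ Finset.Icc 1 (N % ℓ), eC ((h:ℝ) * m / ℓ) := by
  induction N using Nat.strong_induction_on with
  | _ N ih =>
    rcases lt_or_ge N ℓ with h | h
    · rw [Nat.mod_eq_of_lt h]
    · have hK : N = (N - ℓ) + ℓ := by omega
      have hmod : N % ℓ = (N - ℓ) % ℓ := by
        conv_lhs => rw [hK]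
        rw [Nat.add_mod_right]
      have hsplit : ∑ h ∈ Finset.Icc 1 N, eC ((h:ℝ) * m / ℓ) =
          (∑ h ∈ Finset.Icc 1 (N - ℓ), eC ((h:ℝ) * m / ℓ)) +
          ∑ h ∈ Finset.Ioc (N - ℓ) ((N - ℓ) + ℓ), eC ((h:ℝ) * m / ℓ) := by
        rw [show Finset.Icc 1 N = Finset.Ioc 0 N from by ext x; simp; omega,
          show Finset.Icc 1 (N - ℓ) = Finset.Ioc 0 (N - ℓ) from by ext x; simp; omega,
          ← hK, Finset.sum_Ioc_consecutive _ (by omega) (by omega)]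
      rw [hsplit, block_zero hℓ hm hmℓ, add_zero, hmod]
      exact ih (N - ℓ) (by omega)

lemma sum_all (w : ℤ → ℂ) (H : ℕ) :
    ∑ a ∈ Finset.Icc (-(2 * H : ℤ)) (2 * H : ℤ), corrW w H a =
      (∑ b ∈ Finset.Icc (-(H:ℤ)) (H:ℤ), wres w H b) *
        (starRingEnd ℂ) (∑ b ∈ Finset.Icc (-(H:ℤ)) (H:ℤ), wres w H b) := by
  simp only [corrW]
  rw [Finset.sum_comm, Finset.sum_mul]
  apply Finset.sum_congr rfl
  intro n hn
  simp only [Finset.mem_Icc] at hn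
  rw [← Finset.mul_sum]
  congr 1
  rw [map_sum]
  rw [show (∑ a ∈ Finset.Icc (-(2 * H : ℤ)) (2 * H : ℤ), (starRingEnd ℂ) (wres w H (n - a))) =
      ∑ b ∈ Finset.Icc (n - 2 * H) (n + 2 * H), (starRingEnd ℂ) (wres w H b) from
    Finset.sum_nbij' (fun a => n - a) (fun b => n - b)
      (by intro a ha; simp only [Finset.mem_Icc] at *; omega)
      (by intro b hb; simp only [Finset.mem_Icc] at *; omega)
      (by intro a _; ring) (by intro b _; ring) (by intro a _; rfl)]
  refine (Finset.sum_subset ?_ ?_).symm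
  · apply Finset.Icc_subset_Icc <;> omega
  · intro b _ hb
    simp only [Finset.mem_Icc] at hb
    rw [wres, if_neg (by rw [abs_le]; omega), map_zero]

section
variable {ℓ m : ℕ} {w : ℤ → ℂ}
  (hw : w = fun n : ℤ => if 0 < n then eC ((n : ℝ) * (m : ℝ) / (ℓ : ℝ)) else 0)
include hw

lemma wres_eq (H : ℕ) (n : ℤ) :
    wres w H n = if 1 ≤ n ∧ n ≤ (H:ℤ) then eC ((n:ℝ) * m / ℓ) else 0 := by
  subst hw
  simp only [wres]
  by_cases h : 1 ≤ n ∧ n ≤ (H:ℤ)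
  · rw [if_pos h, if_pos (by rw [abs_le]; omega), if_pos (by omega)]
  · rw [if_neg h]
    split_ifs with h1 h2
    · rw [abs_le] at h1; omega
    · rfl
    · rfl

lemma corr_eq (H : ℕ) (a : ℤ) :
    corrW w H a = eC ((a:ℝ) * m / ℓ) * ((max ((H : ℝ) - |(a : ℝ)|) 0 : ℝ) : ℂ) := by
  have key : ∀ n ∈ Finset.Icc (-(H:ℤ)) (H:ℤ),
      wres w H n * (starRingEnd ℂ) (wres w H (n - a)) =
      if n ∈ Finset.Icc (max 1 (a+1)) (min (H:ℤ) ((H:ℤ)+a)) then eC ((a:ℝ) * m / ℓ) else 0 := by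
    intro n _
    rw [wres_eq hw, wres_eq hw]
    simp only [Finset.mem_Icc]
    by_cases h : max 1 (a+1) ≤ n ∧ n ≤ min (H:ℤ) ((H:ℤ)+a)
    · rw [if_pos (by omega), if_pos (by omega), if_pos h, eC_conj, ← eC_add]
      congr 1
      push_cast
      ring
    · rw [if_neg h]
      by_cases h1 : 1 ≤ n ∧ n ≤ (H:ℤ)
      · rw [if_pos h1, if_neg (by omega), map_zero, mul_zero]
      · rw [if_neg h1, zero_mul]
  rw [corrW, Finset.sum_congr rfl key, Finset.sum_ite_mem,
    Finset.inter_eq_right.mpr (Finset.Icc_subset_Icc (by omega) (by omega)),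
    Finset.sum_const, Int.card_Icc, nsmul_eq_mul, mul_comm]
  congr 1
  have hcard : min (H:ℤ) ((H:ℤ)+a) + 1 - max 1 (a+1) = (H:ℤ) - |a| := by
    rcases le_or_gt 0 a with h | h
    · rw [abs_of_nonneg h]; omega
    · rw [abs_of_neg h]; omega
  rw [hcard]
  have habs : ((|a| : ℤ) : ℝ) = |(a:ℝ)| := by push_cast; ring
  rcases le_or_gt |a| (H:ℤ) with h | h
  · have ht := Int.toNat_of_nonneg (by omega : (0:ℤ) ≤ (H:ℤ) - |a|)
    rw [max_eq_left (by rw [sub_nonneg, ← habs]; exact_mod_cast h), ← habs]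
    exact_mod_cast congrArg (Int.cast : ℤ → ℝ) ht
  · rw [Int.toNat_of_nonpos (by omega),
      max_eq_right (by rw [sub_nonpos, ← habs]; exact_mod_cast h.le)]
    simp

lemma sum_filter_corr (hℓ : 2 ≤ ℓ) (H : ℕ) :
    ∑ a ∈ (Finset.Icc (-(2 * H : ℤ)) (2 * H : ℤ)).filter (fun a => (ℓ : ℤ) ∣ a), corrW w H a
    = (((2*((H:ℤ)/ℓ)+1) * H - ℓ * (((H:ℤ)/ℓ) * (((H:ℤ)/ℓ)+1)) : ℤ) : ℂ) := by
  have hℓ0 : 0 < ℓ := by omega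
  have hℓz : (0:ℤ) < (ℓ:ℤ) := by exact_mod_cast hℓ0
  have hℓr : ((ℓ:ℝ)) ≠ 0 := by positivity
  have e1 : (-(2 * H : ℤ)) = -(((2*H : ℕ)):ℤ) := by push_cast; ring
  have e2 : ((2 * H : ℤ)) = (((2*H : ℕ)):ℤ) := by push_cast; ring
  rw [e1, e2, filter_eq_image ℓ hℓ0 (2*H),
    Finset.sum_image (by intro x _ y _ h; exact mul_left_cancel₀ (by positivity) h)]
  have term : ∀ k : ℤ, corrW w H ((ℓ:ℤ) * k) = ((max ((H : ℝ) - (ℓ:ℝ) * |(k:ℝ)|) 0 : ℝ) : ℂ) := by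
    intro k
    rw [corr_eq hw]
    have h : (((ℓ:ℤ) * k : ℤ):ℝ) * m / ℓ = (((k * m : ℤ)):ℝ) := by push_cast; field_simp
    rw [h, eC_int, one_mul]
    congr 2
    push_cast
    rw [abs_mul, abs_of_nonneg (by positivity : (0:ℝ) ≤ (ℓ:ℝ))]
  simp only [term]
  set q : ℕ := H / ℓ with hq
  have hqi : ((q:ℤ)) = (H:ℤ)/(ℓ:ℤ) := by rw [hq]; exact_mod_cast Int.natCast_div H ℓ
  have hq2 : q ≤ 2*H/ℓ := Nat.div_le_div_right (by omega)
  have hsub : Finset.Icc (-(q:ℤ)) (q:ℤ) ⊆ Finset.Icc (-((2*H/ℓ : ℕ):ℤ)) ((2*H/ℓ : ℕ):ℤ) := by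
    apply Finset.Icc_subset_Icc
    · have : ((q:ℤ)) ≤ ((2*H/ℓ:ℕ):ℤ) := by exact_mod_cast hq2
      omega
    · exact_mod_cast hq2
  rw [← Finset.sum_subset hsub]
  · have term2 : ∀ k ∈ Finset.Icc (-(q:ℤ)) (q:ℤ),
        ((max ((H : ℝ) - (ℓ:ℝ) * |(k:ℝ)|) 0 : ℝ) : ℂ) = (((H:ℤ) - ℓ*|k| : ℤ):ℂ) := by
      intro k hk
      simp only [Finset.mem_Icc] at hk
      have h2 : (H:ℤ)/ℓ * ℓ ≤ H := Int.ediv_mul_le H (by omega)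
      have h3 : |k| ≤ (q:ℤ) := by rw [abs_le]; omega
      have h1 : (ℓ:ℤ)*|k| ≤ H := by nlinarith [hqi, abs_nonneg k]
      rw [max_eq_left (by
        rw [sub_nonneg]
        exact_mod_cast h1)]
      have habs2 : |(k:ℝ)| = ((|k|:ℤ):ℝ) := by push_cast; ring
      rw [habs2]
      norm_cast
    rw [Finset.sum_congr rfl term2, ← Int.cast_sum, sum_linear, hqi]
  · intro x hx hx2
    simp only [Finset.mem_Icc] at hx hx2
    have habs : (q:ℤ) + 1 ≤ |x| := by rw [le_abs]; omega
    have hH : (H:ℤ) < ((H:ℤ)/ℓ + 1) * ℓ := Int.lt_ediv_add_one_mul_self H hℓz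
    have h1 : (H:ℤ) ≤ (ℓ:ℤ) * |x| := by nlinarith [hqi]
    rw [max_eq_right (by
      rw [sub_nonpos]
      exact_mod_cast h1)]
    simp

lemma T_eq (H : ℕ) :
    ∑ b ∈ Finset.Icc (-(H:ℤ)) (H:ℤ), wres w H b =
      ∑ h ∈ Finset.Icc 1 H, eC ((h:ℝ) * m / ℓ) := by
  have key : ∀ b ∈ Finset.Icc (-(H:ℤ)) (H:ℤ),
      wres w H b = if b ∈ Finset.Icc (1:ℤ) (H:ℤ) then eC ((b:ℝ) * m / ℓ) else 0 := by
    intro b _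
    rw [wres_eq hw]
    simp only [Finset.mem_Icc]
  rw [Finset.sum_congr rfl key, Finset.sum_ite_mem,
    Finset.inter_eq_right.mpr (Finset.Icc_subset_Icc (by omega) le_rfl)]
  have himg : Finset.Icc (1:ℤ) (H:ℤ) = (Finset.Icc 1 H).image (Nat.cast : ℕ → ℤ) := by
    ext x
    simp only [Finset.mem_Icc, Finset.mem_image]
    constructor
    · intro hx
      exact ⟨x.toNat, by omega, by omega⟩
    · rintro ⟨h, hh, rfl⟩
      omega
  rw [himg, Finset.sum_image (by intro x _ y _ h; exact_mod_cast h)]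
  apply Finset.sum_congr rfl
  intro h _
  norm_num

end


lemma bound2 (ℓ H : ℕ) (hℓ : 2 ≤ ℓ) :
    |((((2*((H:ℤ)/ℓ)+1) * H - ℓ * (((H:ℤ)/ℓ) * (((H:ℤ)/ℓ)+1)) : ℤ) : ℝ)) - (H:ℝ)^2/ℓ| ≤ H := by
  set q : ℕ := H / ℓ with hq
  set r : ℕ := H % ℓ with hr
  have hqi : ((H:ℤ)/(ℓ:ℤ)) = (q:ℤ) := by rw [hq]; exact_mod_cast (Int.natCast_div H ℓ).symm
  have hrl : r < ℓ := Nat.mod_lt H (by omega)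
  have hHd : H = ℓ * q + r := by rw [hq, hr]; exact (Nat.div_add_mod H ℓ).symm
  have hℓ0 : (0:ℝ) < (ℓ:ℝ) := by exact_mod_cast (by omega : 0 < ℓ)
  have hHr : (H:ℝ) = (ℓ:ℝ) * q + r := by exact_mod_cast congrArg (Nat.cast : ℕ → ℝ) hHd
  have key : ((((2*((H:ℤ)/ℓ)+1) * H - ℓ * (((H:ℤ)/ℓ) * (((H:ℤ)/ℓ)+1)) : ℤ) : ℝ)) - (H:ℝ)^2/ℓ
      = r - (r:ℝ)^2/ℓ := by
    rw [hqi]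
    push_cast
    rw [hHr]
    field_simp
    ring
  rw [key]
  have h1 : (r:ℝ)^2/ℓ ≤ r := by
    rw [div_le_iff₀ hℓ0]
    have : (r:ℝ) ≤ ℓ := by exact_mod_cast hrl.le
    nlinarith [Nat.cast_nonneg (α := ℝ) r]
  have h2 : (0:ℝ) ≤ (r:ℝ)^2/ℓ := by positivity
  have h3 : (r:ℝ) ≤ H := by exact_mod_cast Nat.mod_le H ℓ
  rw [abs_of_nonneg (by linarith)]
  linarith

theorem stmt19 :
    ∃ C : ℝ, 0 < C ∧
      ∀ ℓ m : ℕ, 2 ≤ ℓ → 1 ≤ m → m < ℓ →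
        ∀ w : ℤ → ℂ,
          (w = fun n : ℤ => if 0 < n then eC ((n : ℝ) * (m : ℝ) / (ℓ : ℝ)) else 0) →
          -- `w` is absolutely bounded by 1
          (∀ n : ℤ, Norm.norm (w n) ≤ 1) ∧
          (∀ H : ℕ, 0 < H →
            -- (i) the correlation of `w_H`
            (∀ a : ℤ,
              corrW w H a =
                eC ((a : ℝ) * (m : ℝ) / (ℓ : ℝ)) * ((max ((H : ℝ) - |(a : ℝ)|) 0 : ℝ) : ℂ)) ∧
            -- (ii) `Σ_{a ≡ 0 (mod ℓ)} 𝒞_{w_H}(a) = H²/ℓ + O(H)` with absolute constant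
            Norm.norm
                ((∑ a ∈ (Finset.Icc (-(2 * H : ℤ)) (2 * H : ℤ)).filter
                    (fun a => (ℓ : ℤ) ∣ a), corrW w H a) -
                  (((H : ℝ) ^ 2 / (ℓ : ℝ) : ℝ) : ℂ)) ≤ C * H ∧
            -- (iii) `Σ_a 𝒞_{w_H}(a) = |Σ_{h ≤ ℓ{H/ℓ}} e(hm/ℓ)|² ≪ ℓ²`
            (∑ a ∈ Finset.Icc (-(2 * H : ℤ)) (2 * H : ℤ), corrW w H a) =
              (((Norm.norm
                (∑ h ∈ Finset.Icc 1 (H % ℓ), eC ((h : ℝ) * (m : ℝ) / (ℓ : ℝ)))) ^ 2 : ℝ) : ℂ) ∧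
            Norm.norm (∑ a ∈ Finset.Icc (-(2 * H : ℤ)) (2 * H : ℤ), corrW w H a) ≤
              C * (ℓ : ℝ) ^ 2) ∧
          -- consequently, `w` is not an arithmetic weight
          ¬ ∃ C' : ℝ, ∀ H : ℕ, 0 < H →
              Norm.norm
                ((∑ a ∈ (Finset.Icc (-(2 * H : ℤ)) (2 * H : ℤ)).filter
                    (fun a => (ℓ : ℤ) ∣ a), corrW w H a) -
                  (1 / (ℓ : ℂ)) *
                    ∑ a ∈ Finset.Icc (-(2 * H : ℤ)) (2 * H : ℤ), corrW w H a) ≤ C' * H := by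
  refine ⟨1, one_pos, ?_⟩
  intro ℓ m hℓ hm hmℓ w hw
  have hℓ0 : (0:ℝ) < (ℓ:ℝ) := by exact_mod_cast (by omega : 0 < ℓ)
  -- part (ii) estimate, for any H
  have hA : ∀ H : ℕ, Norm.norm
      ((∑ a ∈ (Finset.Icc (-(2 * H : ℤ)) (2 * H : ℤ)).filter
        (fun a => (ℓ : ℤ) ∣ a), corrW w H a) - (((H : ℝ) ^ 2 / (ℓ : ℝ) : ℝ) : ℂ)) ≤ H := by
    intro H
    rw [sum_filter_corr hw hℓ]
    have e : (((((2*((H:ℤ)/ℓ)+1) * H - ℓ * (((H:ℤ)/ℓ) * (((H:ℤ)/ℓ)+1)) : ℤ) : ℂ))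
        - (((H : ℝ) ^ 2 / (ℓ : ℝ) : ℝ) : ℂ))
        = Complex.ofReal (((((2*((H:ℤ)/ℓ)+1) * H - ℓ * (((H:ℤ)/ℓ) * (((H:ℤ)/ℓ)+1)) : ℤ) : ℝ))
            - (H : ℝ) ^ 2 / (ℓ : ℝ)) := by
      push_cast
      ring
    rw [e]
    rw [Complex.norm_real, Real.norm_eq_abs]
    exact bound2 ℓ H hℓ
  -- part (iii) equality, for any H
  have hBe : ∀ H : ℕ, (∑ a ∈ Finset.Icc (-(2 * H : ℤ)) (2 * H : ℤ), corrW w H a) =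
      (((Norm.norm
        (∑ h ∈ Finset.Icc 1 (H % ℓ), eC ((h : ℝ) * (m : ℝ) / (ℓ : ℝ)))) ^ 2 : ℝ) : ℂ) := by
    intro H
    rw [sum_all w H, T_eq hw, S_mod hℓ hm hmℓ H, Complex.mul_conj]
    rw [Complex.sq_norm]
  -- part (iii) bound, for any H
  have hB : ∀ H : ℕ, Norm.norm
      (∑ a ∈ Finset.Icc (-(2 * H : ℤ)) (2 * H : ℤ), corrW w H a) ≤ (ℓ:ℝ)^2 := by
    intro H
    rw [hBe H, Complex.norm_real, Real.norm_eq_abs, abs_of_nonneg (by positivity)]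
    have h1 : Norm.norm (∑ h ∈ Finset.Icc 1 (H % ℓ), eC ((h : ℝ) * (m : ℝ) / (ℓ : ℝ)))
        ≤ (ℓ:ℝ) := by
      refine le_trans (norm_sum_le _ _) ?_
      have : ∀ h ∈ Finset.Icc 1 (H % ℓ),
          Norm.norm (eC ((h : ℝ) * (m : ℝ) / (ℓ : ℝ))) = 1 := fun h _ => eC_abs _
      rw [Finset.sum_congr rfl this, Finset.sum_const, Nat.card_Icc, nsmul_eq_mul, mul_one]
      have : H % ℓ + 1 - 1 = H % ℓ := by omega
      rw [this]
      exact_mod_cast (Nat.mod_lt H (by omega)).le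
    exact pow_le_pow_left₀ (norm_nonneg _) h1 2
  refine ⟨?_, ?_, ?_⟩
  · intro n
    rw [hw]
    dsimp only
    split_ifs
    · rw [eC_abs]
    · simp
  · intro H hH
    exact ⟨fun a => corr_eq hw H a,
      by rw [one_mul]; exact hA H,
      hBe H,
      by rw [one_mul]; exact hB H⟩
  · rintro ⟨C', hC'⟩
    set N : ℕ := max 3 (⌈C'⌉.toNat + 3) with hN
    set H : ℕ := ℓ * N with hHdef
    have hH : 0 < H := by
      have : 3 ≤ N := le_max_left _ _
      have : 0 < ℓ := by omega
      positivity
    have hNC : C' + 3 ≤ (N:ℝ) := by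
      have h1 : (⌈C'⌉.toNat + 3 : ℕ) ≤ N := le_max_right _ _
      have h2 : C' ≤ (⌈C'⌉.toNat : ℝ) := by
        have := Int.self_le_toNat ⌈C'⌉
        have h3 : ((⌈C'⌉:ℤ):ℝ) ≤ ((⌈C'⌉.toNat:ℤ):ℝ) := by exact_mod_cast this
        have h4 : C' ≤ ((⌈C'⌉:ℤ):ℝ) := Int.le_ceil C'
        push_cast at h3 ⊢
        linarith
      have h5 : ((⌈C'⌉.toNat + 3 : ℕ):ℝ) ≤ (N:ℝ) := by exact_mod_cast h1
      push_cast at h5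
      linarith
    have hN3 : (3:ℝ) ≤ (N:ℝ) := by exact_mod_cast (le_max_left 3 (⌈C'⌉.toNat + 3))
    set A : ℂ := ∑ a ∈ (Finset.Icc (-(2 * H : ℤ)) (2 * H : ℤ)).filter
      (fun a => (ℓ : ℤ) ∣ a), corrW w H a with hAdef
    set B : ℂ := ∑ a ∈ Finset.Icc (-(2 * H : ℤ)) (2 * H : ℤ), corrW w H a with hBdef
    have tri : Norm.norm ((((H : ℝ) ^ 2 / (ℓ : ℝ) : ℝ) : ℂ)) ≤
        Norm.norm ((((H : ℝ) ^ 2 / (ℓ : ℝ) : ℝ) : ℂ) - A)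
        + Norm.norm (A - (1 / (ℓ : ℂ)) * B)
        + Norm.norm ((1 / (ℓ : ℂ)) * B) := by
      have h1 : (((H : ℝ) ^ 2 / (ℓ : ℝ) : ℝ) : ℂ) =
          ((((H : ℝ) ^ 2 / (ℓ : ℝ) : ℝ) : ℂ) - A) + (A - (1 / (ℓ : ℂ)) * B)
          + ((1 / (ℓ : ℂ)) * B) := by ring
      calc Norm.norm ((((H : ℝ) ^ 2 / (ℓ : ℝ) : ℝ) : ℂ))
          = Norm.norm (((((H : ℝ) ^ 2 / (ℓ : ℝ) : ℝ) : ℂ) - A) + (A - (1 / (ℓ : ℂ)) * B)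
            + ((1 / (ℓ : ℂ)) * B)) := by rw [← h1]
        _ ≤ _ := le_trans (norm_add_le _ _)
            (add_le_add_left (norm_add_le _ _) _)
    have e1 : Norm.norm ((((H : ℝ) ^ 2 / (ℓ : ℝ) : ℝ) : ℂ)) = (H:ℝ)^2/(ℓ:ℝ) := by
      rw [Complex.norm_real, Real.norm_eq_abs, abs_of_nonneg (by positivity)]
    have e2 : Norm.norm ((((H : ℝ) ^ 2 / (ℓ : ℝ) : ℝ) : ℂ) - A) ≤ H := by
      rw [norm_sub_rev]
      exact hA H
    have e3 : Norm.norm ((1 / (ℓ : ℂ)) * B) ≤ (ℓ:ℝ) := by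
      rw [norm_mul, norm_div, norm_one, Complex.norm_natCast]
      rw [div_mul_eq_mul_div, one_mul, div_le_iff₀ hℓ0]
      calc Norm.norm B ≤ (ℓ:ℝ)^2 := hB H
        _ = (ℓ:ℝ) * (ℓ:ℝ) := by ring
    have e4 : Norm.norm (A - (1 / (ℓ : ℂ)) * B) ≤ C' * H := hC' H hH
    have hfinal : (H:ℝ)^2/(ℓ:ℝ) ≤ (H:ℝ) + C' * H + ℓ := by
      rw [← e1]
      calc Norm.norm ((((H : ℝ) ^ 2 / (ℓ : ℝ) : ℝ) : ℂ)) ≤ _ := tri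
        _ ≤ (H:ℝ) + C' * H + ℓ := by
            gcongr -- e2 e4 e3
    have hHR : (H:ℝ) = (ℓ:ℝ) * N := by rw [hHdef]; push_cast; ring
    rw [hHR] at hfinal
    have hdiv : (ℓ:ℝ) * (N:ℝ)^2 ≤ (ℓ:ℝ)*N + C' * ((ℓ:ℝ)*N) + ℓ := by
      calc (ℓ:ℝ) * (N:ℝ)^2 = ((ℓ:ℝ)*N)^2/(ℓ:ℝ) := by field_simp
        _ ≤ _ := hfinal
    have h0N : (0:ℝ) ≤ (N:ℝ) := by positivity
    nlinarith [hdiv, hN3, hNC, hℓ0,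
      mul_nonneg (mul_nonneg hℓ0.le h0N) (by linarith : (0:ℝ) ≤ (N:ℝ) - (C' + 3)),
      mul_pos hℓ0 (by linarith : (0:ℝ) < 2 * (N:ℝ) - 1)]
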